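/- Let R be an integrally closed domain with fraction field K, let L/K be a finite field extension, and let B be the integral closure of R in L. If b ∈ B satisfies b ⊗ 1 = 1 ⊗ b in B ⊗_R B, then b ∈ R. Equivalently, the sequence R → B ⇉ B ⊗_R B (where the two maps send b to b ⊗ 1 and 1 ⊗ b) is exact at B, i.e., the equalizer of the two maps is exactly the image of R. -/

import Mathlib

open TensorProduct

/-- If `x ⊗ 1 = 1 ⊗ x` in `L ⊗[K] L` for a field extension `L/K`, then `x ∈ K`. -/
lemma aux_tmul_eq_tmul_mem_base {K L : Type*} [Field K] [Field L] [Algebra K L]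
    (x : L) (hx : (x ⊗ₜ[K] (1 : L) : L ⊗[K] L) = 1 ⊗ₜ[K] x) :
    ∃ k : K, algebraMap K L k = x := by
  -- choose a K-linear functional `f : L → K` with `f 1 = 1`
  have hli : LinearIndepOn K id ({1} : Set L) :=
    LinearIndepOn.singleton one_ne_zero
  let Bas := Module.Basis.extend hli
  have h1mem : (1 : L) ∈ hli.extend (Set.subset_univ _) :=
    hli.subset_extend _ rfl
  let f : L →ₗ[K] K := Bas.coord ⟨1, h1mem⟩
  have hBas : Bas ⟨1, h1mem⟩ = (1 : L) := Module.Basis.extend_apply_self hli _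
  have hf1 : f 1 = 1 := by
    calc f 1 = Bas.coord ⟨1, h1mem⟩ (Bas ⟨1, h1mem⟩) := (congrArg f hBas).symm
    _ = 1 := by simp [Module.Basis.coord_apply, Module.Basis.repr_self]
  -- the map `L ⊗ L → L`, `a ⊗ b ↦ f b • a`
  let φ : L ⊗[K] L →ₗ[K] L :=
    TensorProduct.lift ((LinearMap.lsmul K L ∘ₗ f).flip)
  have := congrArg φ hx
  simp only [φ, TensorProduct.lift.tmul, LinearMap.flip_apply, LinearMap.comp_apply,
    LinearMap.lsmul_apply, hf1, one_smul] at this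
  exact ⟨f x, by rw [Algebra.algebraMap_eq_smul_one, ← this]⟩

/-- Let `R` be an integrally closed domain with fraction field `K`, `L/K` a finite field
extension, and `B` the integral closure of `R` in `L`. If `b ∈ B` satisfies
`b ⊗ 1 = 1 ⊗ b` in `B ⊗_R B`, then `b` comes from `R`. In other words, the equalizer of
the two natural maps `B ⇉ B ⊗_R B` is exactly the image of `R`. -/
theorem equalizer_tensor_eq_base {R K L : Type*} [CommRing R] [IsDomain R]
    [IsIntegrallyClosed R] [Field K] [Algebra R K] [IsFractionRing R K]
    [Field L] [Algebra K L] [FiniteDimensional K L] [Algebra R L] [IsScalarTower R K L]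
    (b : integralClosure R L)
    (hb : (b ⊗ₜ[R] (1 : integralClosure R L) : integralClosure R L ⊗[R] integralClosure R L)
        = (1 : integralClosure R L) ⊗ₜ[R] b) :
    ∃ r : R, algebraMap R (integralClosure R L) r = b := by
  -- map `B ⊗[R] B → L ⊗[K] L`
  let ι : integralClosure R L →ₐ[R] L := (integralClosure R L).val
  let g₁ : integralClosure R L →ₐ[R] (L ⊗[K] L) :=
    ((Algebra.TensorProduct.includeLeft (R := K) (S := K) (A := L) (B := L)).restrictScalars R).comp ι
  let g₂ : integralClosure R L →ₐ[R] (L ⊗[K] L) :=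
    ((Algebra.TensorProduct.includeRight (R := K) (A := L) (B := L)).restrictScalars R).comp ι
  let g : (integralClosure R L ⊗[R] integralClosure R L) →ₐ[R] (L ⊗[K] L) :=
    Algebra.TensorProduct.lift g₁ g₂ (fun x y => Commute.all _ _)
  have hL : ((b : L) ⊗ₜ[K] (1 : L) : L ⊗[K] L) = 1 ⊗ₜ[K] (b : L) := by
    have := congrArg g hb
    simpa [g, g₁, g₂, ι, Algebra.TensorProduct.lift_tmul] using this
  obtain ⟨k, hk⟩ := aux_tmul_eq_tmul_mem_base (b : L) hL
  have hbint : IsIntegral R ((algebraMap K L) k) := by rw [hk]; exact b.2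
  have hint : IsIntegral R k :=
    (isIntegral_algebraMap_iff (algebraMap K L).injective).mp hbint
  obtain ⟨r, hr⟩ := IsIntegrallyClosed.isIntegral_iff.mp hint
  refine ⟨r, Subtype.ext ?_⟩
  show algebraMap R L r = (b : L)
  rw [IsScalarTower.algebraMap_apply R K L, hr, hk]
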